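/- For the ω-Subset Selection mechanism with the optimal subset size ω = k/(e^ε+1), the probability that a value v' ≠ v (the true value) lies in the reported subset Ω equals q = (ωe^ε(ω−1) + (k−ω)ω)/((k−1)(ωe^ε + k − ω)), while the true value lies in Ω with probability p = ωe^ε/(ωe^ε + k − ω), and p/q ≥ e^ε reduces to the SS privacy guarantee p(1−q')/(q(1−p')) form; in particular p > q whenever ω < k. -/
import Mathlib


/-- ω-Subset Selection: the probability that a value `v' ≠ v` lies in the reported
subset equals `q = (ω e^ε (ω-1) + (k-ω) ω)/((k-1)(ω e^ε + k - ω))`, where the true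
value is included with probability `p = ω e^ε/(ω e^ε + k - ω)`; in particular
`q < p` whenever `ω < k`. -/
theorem ss_probs (ε k ω p q : ℝ) (hε : 0 < ε) (hω1 : 1 ≤ ω) (hωk : ω < k)
    (hp : p = ω * Real.exp ε / (ω * Real.exp ε + k - ω))
    (hq : q = (ω * Real.exp ε * (ω - 1) + (k - ω) * ω) /
      ((k - 1) * (ω * Real.exp ε + k - ω))) :
    p * (ω - 1) / (k - 1) + (1 - p) * ω / (k - 1) = q ∧ q < p := by
  have hE : 1 < Real.exp ε := by
    have := Real.add_one_le_exp ε; linarith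
  have hk1 : 1 < k := lt_of_le_of_lt hω1 hωk
  have hD : 0 < ω * Real.exp ε + k - ω := by nlinarith
  have hk1' : (0:ℝ) < k - 1 := by linarith
  subst hp hq
  constructor
  · field_simp
    ring
  · rw [div_lt_div_iff₀ (by positivity) hD]
    nlinarith [mul_pos (sub_pos.mpr hωk) (mul_pos (by linarith : (0:ℝ) < ω) (by linarith : (0:ℝ) < Real.exp ε - 1))]
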